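/- Let X be a simplicial object in a category with pullbacks and let γ : X → Dec_⊥(X) be a simplicial map satisfying ε ∘ γ = id. If γ is cartesian (all its naturality squares are pullbacks), then γ equals the Dec_⊥-coalgebra structure on X obtained by pulling back the canonical coalgebra structure δ : Dec_⊥(X) → Dec_⊥²(X) along γ; in particular γ satisfies the coassociativity axiom Dec_⊥(γ) ∘ γ = δ ∘ γ and is a rigid Dec_⊥-coalgebra. -/

import Mathlib

open CategoryTheory Simplicial Opposite

/-- Let `γ : X → Dec_⊥(X)` be a simplicial map (with components
`γ n : X_n → X_{n+1}`, where the faces of `Dec_⊥(X)` are `X.δ i.succ` and its degeneracies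
are `X.σ i.succ`) satisfying `ε ∘ γ = id` (i.e. `γ n ≫ X.δ 0 = 𝟙`).  If `γ` is cartesian
(all its naturality squares are pullbacks), then `γ` satisfies the coassociativity axiom
`Dec_⊥(γ) ∘ γ = δ ∘ γ` (degreewise: `γ n ≫ γ (n+1) = γ n ≫ X.σ 0`), i.e. `γ` is a rigid
`Dec_⊥`-coalgebra structure (obtained by pulling back the canonical coalgebra structure on
`Dec_⊥(X)` along `γ`). -/
theorem rigid_coalg_of_cartesian_counit {C : Type*} [Category C]
    [Limits.HasPullbacks C] (X : SimplicialObject C)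
    (γ : ∀ n : ℕ, X _⦋n⦌ ⟶ X _⦋n+1⦌)
    -- `γ` is a simplicial map `X ⟶ Dec_⊥ X`:
    (nat_δ : ∀ (n : ℕ) (i : Fin (n + 2)), X.δ i ≫ γ n = γ (n+1) ≫ X.δ i.succ)
    (nat_σ : ∀ (n : ℕ) (i : Fin (n + 1)), X.σ i ≫ γ (n+1) = γ n ≫ X.σ i.succ)
    -- `ε ∘ γ = id`:
    (counit : ∀ n : ℕ, γ n ≫ X.δ (0 : Fin (n + 2)) = 𝟙 _)
    -- `γ` is cartesian:
    (cart_δ : ∀ (n : ℕ) (i : Fin (n + 2)),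
      IsPullback (X.δ i) (γ (n+1)) (γ n) (X.δ i.succ))
    (cart_σ : ∀ (n : ℕ) (i : Fin (n + 1)),
      IsPullback (X.σ i) (γ n) (γ (n+1)) (X.σ i.succ)) :
    ∀ n : ℕ, γ n ≫ γ (n+1) = γ n ≫ X.σ (0 : Fin (n + 2)) := by
  intro n
  -- basic simplicial identities we need
  have hσδ1 : X.σ (0 : Fin (n+2)) ≫ X.δ ((0 : Fin (n+2)).succ) = 𝟙 _ :=
    X.δ_comp_σ_succ
  have hσδ0 : X.σ (0 : Fin (n+2)) ≫ X.δ (0 : Fin (n+3)) = 𝟙 _ := by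
    have := X.δ_comp_σ_self (n := n+1) (i := (0 : Fin (n+2)))
    simpa using this
  have hσδ0' : X.σ (0 : Fin (n+1)) ≫ X.δ (0 : Fin (n+2)) = 𝟙 _ := by
    have := X.δ_comp_σ_self (n := n) (i := (0 : Fin (n+1)))
    simpa using this
  have hσδ2 : X.σ (0 : Fin (n+2)) ≫ X.δ ((1 : Fin (n+2)).succ)
      = X.δ (1 : Fin (n+2)) ≫ X.σ (0 : Fin (n+1)) := by
    have := X.δ_comp_σ_of_gt (n := n) (i := (1 : Fin (n+2))) (j := (0 : Fin (n+1)))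
      (by simp [Fin.castSucc_zero])
    simpa using this
  -- the lift x with x ≫ γ (n+1) = γ n ≫ σ 0
  have cone1 : (𝟙 (X _⦋n⦌)) ≫ γ n = (γ n ≫ X.σ 0) ≫ X.δ ((0 : Fin (n+2)).succ) := by
    rw [Category.id_comp, Category.assoc, hσδ1, Category.comp_id]
  set x : X _⦋n⦌ ⟶ X _⦋n+1⦌ := (cart_δ n 0).lift (𝟙 _) (γ n ≫ X.σ 0) cone1 with hxdef
  have hx : x ≫ γ (n+1) = γ n ≫ X.σ 0 := (cart_δ n 0).lift_snd _ _ _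
  -- e1 : x ≫ δ1 ≫ γ n = γ n ≫ δ1 ≫ σ0
  have e1 : x ≫ X.δ (1 : Fin (n+2)) ≫ γ n
      = γ n ≫ X.δ (1 : Fin (n+2)) ≫ X.σ (0 : Fin (n+1)) := by
    calc x ≫ X.δ (1 : Fin (n+2)) ≫ γ n
        = x ≫ γ (n+1) ≫ X.δ ((1 : Fin (n+2)).succ) := by rw [nat_δ n 1]
      _ = (γ n ≫ X.σ 0) ≫ X.δ ((1 : Fin (n+2)).succ) := by
          rw [← Category.assoc, hx]
      _ = γ n ≫ X.δ (1 : Fin (n+2)) ≫ X.σ (0 : Fin (n+1)) := by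
          rw [Category.assoc, hσδ2]
  -- eA : x ≫ δ1 = γ n ≫ δ1
  have eA : x ≫ X.δ (1 : Fin (n+2)) = γ n ≫ X.δ (1 : Fin (n+2)) := by
    calc x ≫ X.δ (1 : Fin (n+2))
        = (x ≫ X.δ (1 : Fin (n+2)) ≫ γ n) ≫ X.δ (0 : Fin (n+2)) := by
          rw [Category.assoc, Category.assoc, counit n, Category.comp_id]
      _ = (γ n ≫ X.δ (1 : Fin (n+2)) ≫ X.σ (0 : Fin (n+1))) ≫ X.δ (0 : Fin (n+2)) := by
          rw [e1]
      _ = γ n ≫ X.δ (1 : Fin (n+2)) := by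
          rw [Category.assoc, Category.assoc, hσδ0', Category.comp_id]
  -- cone2 : (γ n ≫ δ1) ≫ γ n = (x ≫ σ0) ≫ δ2
  have cone2 : (γ n ≫ X.δ (1 : Fin (n+2))) ≫ γ n
      = (x ≫ X.σ (0 : Fin (n+2))) ≫ X.δ ((1 : Fin (n+2)).succ) := by
    calc (γ n ≫ X.δ (1 : Fin (n+2))) ≫ γ n
        = x ≫ X.δ (1 : Fin (n+2)) ≫ γ n := by rw [← Category.assoc, eA]
      _ = γ n ≫ X.δ (1 : Fin (n+2)) ≫ X.σ (0 : Fin (n+1)) := e1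
      _ = x ≫ X.δ (1 : Fin (n+2)) ≫ X.σ (0 : Fin (n+1)) := by
          rw [← Category.assoc, ← eA, Category.assoc]
      _ = (x ≫ X.σ (0 : Fin (n+2))) ≫ X.δ ((1 : Fin (n+2)).succ) := by
          rw [Category.assoc, ← hσδ2]
  -- the lift L with L ≫ γ (n+1) = x ≫ σ0
  set L : X _⦋n⦌ ⟶ X _⦋n+1⦌ :=
    (cart_δ n 1).lift (γ n ≫ X.δ (1 : Fin (n+2))) (x ≫ X.σ (0 : Fin (n+2))) cone2 with hLdef
  have hL : L ≫ γ (n+1) = x ≫ X.σ (0 : Fin (n+2)) := (cart_δ n 1).lift_snd _ _ _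
  -- L = x
  have hLx : L = x := by
    calc L = (L ≫ γ (n+1)) ≫ X.δ (0 : Fin (n+3)) := by
          rw [Category.assoc, counit (n+1), Category.comp_id]
      _ = x ≫ X.σ (0 : Fin (n+2)) ≫ X.δ (0 : Fin (n+3)) := by
          rw [hL, Category.assoc]
      _ = x := by rw [hσδ0, Category.comp_id]
  -- x ≫ σ0 = γ n ≫ σ0
  have hxs : x ≫ X.σ (0 : Fin (n+2)) = γ n ≫ X.σ (0 : Fin (n+2)) := by
    rw [← hL, hLx, hx]
  -- x = γ n
  have hxγ : x = γ n := by
    calc x = (x ≫ X.σ (0 : Fin (n+2))) ≫ X.δ ((0 : Fin (n+2)).succ) := by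
          rw [Category.assoc, hσδ1, Category.comp_id]
      _ = (γ n ≫ X.σ (0 : Fin (n+2))) ≫ X.δ ((0 : Fin (n+2)).succ) := by rw [hxs]
      _ = γ n := by rw [Category.assoc, hσδ1, Category.comp_id]
  rw [← hxγ, hx, hxs]
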